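/- Let (Ω, μ) be a probability space, H a separable real Hilbert space, K ⊆ H a nonempty closed convex set, and 𝒦 = {x ∈ L²(μ, H) : x(ω) ∈ K a.e.}. Let x* ∈ 𝒦 and F ∈ L²(μ, H). If ∫ ⟨F(ω), z(ω) − x*(ω)⟩ dμ(ω) ≥ 0 for every z ∈ 𝒦, then for μ-a.e. ω it holds that ⟨F(ω), a − x*(ω)⟩ ≥ 0 for all a ∈ K. -/

import Mathlib

open MeasureTheory InnerProductSpace

theorem integrated_VI_implies_pointwise_VI
    {Ω : Type*} [MeasurableSpace Ω] (μ : Measure Ω) [IsProbabilityMeasure μ]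
    {H : Type*} [NormedAddCommGroup H] [InnerProductSpace ℝ H] [CompleteSpace H]
    [SecondCountableTopology H]
    (K : Set H) (hKne : K.Nonempty) (hKcl : IsClosed K) (hKconv : Convex ℝ K)
    (xStar F : Lp H 2 μ)
    (hxK : ∀ᵐ ω ∂μ, xStar ω ∈ K)
    (hVI : ∀ z : Lp H 2 μ, (∀ᵐ ω ∂μ, z ω ∈ K) →
      0 ≤ ∫ ω, ⟪F ω, z ω - xStar ω⟫_ℝ ∂μ) :
    ∀ᵐ ω ∂μ, ∀ a ∈ K, 0 ≤ ⟪F ω, a - xStar ω⟫_ℝ := by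
  -- Step 1: for each fixed a ∈ K, the pointwise inequality holds a.e.
  have key : ∀ a ∈ K, ∀ᵐ ω ∂μ, 0 ≤ ⟪F ω, a - xStar ω⟫_ℝ := by
    intro a ha
    set f : Ω → ℝ := fun ω => ⟪F ω, a - xStar ω⟫_ℝ with hf_def
    have hfm : Measurable f := by
      have : StronglyMeasurable f :=
        (Lp.stronglyMeasurable F).inner
          (stronglyMeasurable_const.sub (Lp.stronglyMeasurable xStar))
      exact this.measurable
    set A : Set Ω := {ω | f ω < 0} with hA_def
    have hA : MeasurableSet A := measurableSet_lt hfm measurable_const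
    -- the test function : a on A, xStar elsewhere
    set g : Ω → H := A.piecewise (fun _ => a) (⇑xStar) with hg_def
    have hgsum : g = fun ω => A.indicator (fun _ => a) ω + Aᶜ.indicator (⇑xStar) ω := by
      funext ω
      by_cases h : ω ∈ A <;> simp [hg_def, Set.piecewise, Set.indicator, h]
    have hg : MemLp g 2 μ := by
      rw [hgsum]
      exact ((memLp_const a).indicator hA).add ((Lp.memLp xStar).indicator hA.compl)
    set z : Lp H 2 μ := hg.toLp g with hz_def
    have hz : (⇑z) =ᵐ[μ] g := hg.coeFn_toLp
    have hzK : ∀ᵐ ω ∂μ, z ω ∈ K := by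
      filter_upwards [hz, hxK] with ω hω hωK
      rw [hω]
      by_cases h : ω ∈ A <;> simp [hg_def, Set.piecewise, h, ha, hωK]
    have hVIz := hVI z hzK
    -- rewrite integral as an integral over A
    have hcongr : (fun ω => ⟪F ω, z ω - xStar ω⟫_ℝ) =ᵐ[μ] A.indicator f := by
      filter_upwards [hz] with ω hω
      rw [hω]
      by_cases h : ω ∈ A <;>
        simp [hg_def, hf_def, Set.piecewise, Set.indicator, h, sub_self]
    rw [integral_congr_ae hcongr, integral_indicator hA] at hVIz
    -- integrability of f
    have hfint : Integrable f μ := by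
      have h2 : MemLp (fun ω => a - xStar ω) 2 μ :=
        (memLp_const a).sub (Lp.memLp xStar)
      have := L2.integrable_inner (𝕜 := ℝ) F (h2.toLp _)
      refine this.congr ?_
      filter_upwards [h2.coeFn_toLp] with ω hω
      rw [hω]
    -- the restricted integral of -f is zero
    have hmemA : ∀ᵐ ω ∂μ.restrict A, ω ∈ A := ae_restrict_mem hA
    have hnn : 0 ≤ᵐ[μ.restrict A] fun ω => -f ω := by
      filter_upwards [hmemA] with ω hω
      simpa using le_of_lt hω
    have hzero : ∫ ω in A, (-f ω) ∂μ = 0 := by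
      have h1 : ∫ ω in A, (-f ω) ∂μ = -∫ ω in A, f ω ∂μ := integral_neg f
      have h2 : 0 ≤ ∫ ω in A, (-f ω) ∂μ :=
        integral_nonneg_of_ae hnn
      linarith
    have haez : (fun ω => -f ω) =ᵐ[μ.restrict A] 0 :=
      (integral_eq_zero_iff_of_nonneg_ae hnn (hfint.integrableOn.neg)).mp hzero
    have hFalse : ∀ᵐ ω ∂μ.restrict A, False := by
      filter_upwards [haez, hmemA] with ω h1 h2
      have : f ω < 0 := h2
      simp only [Pi.zero_apply] at h1
      linarith
    have hμA : μ A = 0 := by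
      have := ae_iff.mp hFalse
      simpa [Measure.restrict_apply MeasurableSet.univ] using this
    rw [ae_iff]
    convert hμA using 2
    ext ω
    simp [hA_def, hf_def, not_le]
  -- Step 2: countable dense subset of K
  obtain ⟨s, hsc, hsd⟩ := TopologicalSpace.exists_countable_dense K
  set D : Set H := Subtype.val '' s with hD_def
  have hDK : D ⊆ K := by rintro d ⟨⟨y, hy⟩, _, rfl⟩; exact hy
  have hDc : D.Countable := hsc.image _
  have hKD : K ⊆ closure D := by
    intro a ha
    have h1 : (⟨a, ha⟩ : K) ∈ closure s := by
      rw [hsd.closure_eq]; trivial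
    have h2 := (image_closure_subset_closure_image continuous_subtype_val)
      (Set.mem_image_of_mem _ h1)
    exact h2
  have hDall : ∀ᵐ ω ∂μ, ∀ d ∈ D, 0 ≤ ⟪F ω, d - xStar ω⟫_ℝ :=
    (ae_ball_iff hDc).mpr fun d hd => key d (hDK hd)
  filter_upwards [hDall] with ω hω a ha
  have hcl : IsClosed {b : H | 0 ≤ ⟪F ω, b - xStar ω⟫_ℝ} :=
    isClosed_le continuous_const
      (continuous_const.inner (continuous_id.sub continuous_const))
  have hsub : D ⊆ {b : H | 0 ≤ ⟪F ω, b - xStar ω⟫_ℝ} := fun d hd => hω d hd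
  have : a ∈ closure {b : H | 0 ≤ ⟪F ω, b - xStar ω⟫_ℝ} :=
    closure_mono hsub (hKD ha)
  rwa [hcl.closure_eq] at this
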